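/- A fixed point of the T-operator iteration can be moved to a balanced place: let (X, μ) be a measure space with 0 < μ(X) < ∞, let N ≥ 1, let s : X → ℂᴺ be measurable with s(x) ≠ 0 for μ-almost every x, and let h be an N×N positive-definite Hermitian complex matrix satisfying the fixed-point (balanced) condition T_s(h) = h⁻¹ (with the integrability hypotheses holding). Let h^{1/2} denote the unique positive-definite Hermitian square root of h. Then the orthonormalized sections s'(x) := h^{1/2}·s(x) satisfy T_{s'}(𝟙) = 𝟙, where 𝟙 is the N×N identity matrix; i.e., after the change of basis s ↦ h^{1/2}s, the metric becomes the unit matrix and the embedding is balanced. -/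

import Mathlib

open MeasureTheory Matrix
open scoped ComplexOrder

/-- The square root of a positive semidefinite matrix, as defined in the older Mathlib
(`Matrix.PosSemidef.sqrt`, since removed from Mathlib). -/
noncomputable def Matrix.PosSemidef.sqrt {n : Type*} [Fintype n] [DecidableEq n] {𝕜 : Type*}
    [RCLike 𝕜] {A : Matrix n n 𝕜} (hA : A.PosSemidef) : Matrix n n 𝕜 :=
  hA.1.eigenvectorUnitary.1 * diagonal ((↑) ∘ (Real.sqrt ∘ hA.1.eigenvalues)) *
    (star hA.1.eigenvectorUnitary : Matrix n n 𝕜)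

/-- The generalized T-operator: given sections `s : X → ℂᴺ` and a metric `h`,
`T_s(h) := (N/μ(X)) ∫_X s(x)s(x)ᴴ / (s(x)ᴴ h s(x)) dμ(x)`. -/
noncomputable def Toperator {X : Type*} [MeasurableSpace X] (μ : Measure X) (N : ℕ)
    (s : X → Fin N → ℂ) (h : Matrix (Fin N) (Fin N) ℂ) : Matrix (Fin N) (Fin N) ℂ :=
  Matrix.of fun α β =>
    ((N : ℂ) / ((μ Set.univ).toReal : ℂ)) *
      ∫ x, s x α * (starRingEnd ℂ) (s x β) / (star (s x) ⬝ᵥ h.mulVec (s x)) ∂μ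

/-- A fixed point of the T-operator iteration can be moved to a balanced place: if `h`
is Hermitian positive definite and balanced, i.e. `T_s(h) = h⁻¹`, then the
orthonormalized sections `s'(x) = h^{1/2}·s(x)` (with `h^{1/2}` the unique
positive-semidefinite Hermitian square root of `h`) satisfy `T_{s'}(𝟙) = 𝟙`. -/
theorem Toperator_balanced {X : Type*} [MeasurableSpace X] (μ : Measure X)
    (hμ0 : 0 < μ Set.univ) (hμfin : μ Set.univ < ⊤)
    (N : ℕ) (hN : 1 ≤ N) (s : X → Fin N → ℂ) (hs : Measurable s)
    (hsne : ∀ᵐ x ∂μ, s x ≠ 0)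
    (h : Matrix (Fin N) (Fin N) ℂ) (hh : h.PosDef)
    (hint : ∀ α β : Fin N, Integrable
      (fun x => s x α * (starRingEnd ℂ) (s x β) / (star (s x) ⬝ᵥ h.mulVec (s x))) μ)
    (hbal : Toperator μ N s h = h⁻¹) :
    Toperator μ N (fun x => (hh.posSemidef.sqrt).mulVec (s x))
      (1 : Matrix (Fin N) (Fin N) ℂ) = 1 := by
  set Q := hh.posSemidef.sqrt with hQdef
  have hQH : Qᴴ = Q := by
    simp only [hQdef, Matrix.PosSemidef.sqrt, conjTranspose_mul, diagonal_conjTranspose,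
      Matrix.mul_assoc]
    congr 2
    · ext i j; simp
    · ext i j; by_cases hij : i = j <;> simp [diagonal_apply, hij]
  have hQQ : Q * Q = h := by
    simp only [hQdef, Matrix.PosSemidef.sqrt]
    conv_rhs => rw [hh.posSemidef.1.spectral_theorem, Unitary.conjStarAlgAut_apply]
    have hu : (star hh.posSemidef.1.eigenvectorUnitary : Matrix (Fin N) (Fin N) ℂ) *
        hh.posSemidef.1.eigenvectorUnitary.1 = 1 := Unitary.coe_star_mul_self _
    rw [Matrix.mul_assoc _ (star _ : Matrix (Fin N) (Fin N) ℂ), ← Matrix.mul_assoc (star _ : Matrix (Fin N) (Fin N) ℂ), ← Matrix.mul_assoc (star _ : Matrix (Fin N) (Fin N) ℂ), hu, Matrix.one_mul, ← Matrix.mul_assoc, Matrix.mul_assoc _ (diagonal _) (diagonal _), diagonal_mul_diagonal]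
    congr 3
    ext i
    simp only [Function.comp_apply]
    rw [← RCLike.ofReal_mul, Real.mul_self_sqrt (hh.posSemidef.eigenvalues_nonneg i)]
  have hdet : IsUnit Q.det := by
    have h1 : Q.det * Q.det = h.det := by rw [← det_mul, hQQ]
    have h2 : h.det ≠ 0 := hh.det_pos.ne'
    have : Q.det ≠ 0 := by
      intro h0
      rw [h0, mul_zero] at h1
      exact h2 h1.symm
    exact this.isUnit
  -- the denominators agree
  have hD : ∀ x, star (Q.mulVec (s x)) ⬝ᵥ
      (1 : Matrix (Fin N) (Fin N) ℂ).mulVec (Q.mulVec (s x))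
      = star (s x) ⬝ᵥ h.mulVec (s x) := by
    intro x
    rw [one_mulVec, star_mulVec, hQH, dotProduct_mulVec, vecMul_vecMul, hQQ,
      ← dotProduct_mulVec]
  have key : Toperator μ N (fun x => Q.mulVec (s x)) 1 = Q * Toperator μ N s h * Q := by
    ext α β
    have hconj : ∀ (β δ : Fin N), (starRingEnd ℂ) (Q β δ) = Q δ β := by
      intro β δ
      have := congrFun (congrFun hQH δ) β
      simpa [conjTranspose_apply] using this
    have hintegrand : ∀ x, Q.mulVec (s x) α * (starRingEnd ℂ) (Q.mulVec (s x) β) /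
          (star (Q.mulVec (s x)) ⬝ᵥ (1 : Matrix (Fin N) (Fin N) ℂ).mulVec (Q.mulVec (s x)))
        = ∑ γ, ∑ δ, Q α γ * Q δ β *
            (s x γ * (starRingEnd ℂ) (s x δ) / (star (s x) ⬝ᵥ h.mulVec (s x))) := by
      intro x
      rw [hD x]
      simp only [mulVec, dotProduct, map_sum]
      rw [Finset.sum_mul_sum]
      rw [Finset.sum_div]
      refine Finset.sum_congr rfl fun γ _ => ?_
      rw [Finset.sum_div]
      refine Finset.sum_congr rfl fun δ _ => ?_
      rw [_root_.map_mul, hconj]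
      ring
    have hint' : ∀ γ δ : Fin N, Integrable (fun x => Q α γ * Q δ β *
        (s x γ * (starRingEnd ℂ) (s x δ) / (star (s x) ⬝ᵥ h.mulVec (s x)))) μ :=
      fun γ δ => (hint γ δ).const_mul _
    simp only [Toperator, of_apply]
    calc ((N : ℂ) / ((μ Set.univ).toReal : ℂ)) *
          ∫ x, Q.mulVec (s x) α * (starRingEnd ℂ) (Q.mulVec (s x) β) /
            (star (Q.mulVec (s x)) ⬝ᵥ (1 : Matrix (Fin N) (Fin N) ℂ).mulVec (Q.mulVec (s x))) ∂μ
        = ((N : ℂ) / ((μ Set.univ).toReal : ℂ)) *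
          ∫ x, ∑ γ, ∑ δ, Q α γ * Q δ β *
            (s x γ * (starRingEnd ℂ) (s x δ) / (star (s x) ⬝ᵥ h.mulVec (s x))) ∂μ := by
          congr 1
          exact integral_congr_ae (Filter.Eventually.of_forall hintegrand)
      _ = ((N : ℂ) / ((μ Set.univ).toReal : ℂ)) *
          ∑ γ, ∑ δ, Q α γ * Q δ β *
            ∫ x, s x γ * (starRingEnd ℂ) (s x δ) / (star (s x) ⬝ᵥ h.mulVec (s x)) ∂μ := by
          congr 1
          rw [integral_finset_sum _ (fun γ _ => integrable_finset_sum _ (fun δ _ => hint' γ δ))]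
          refine Finset.sum_congr rfl fun γ _ => ?_
          rw [integral_finset_sum _ (fun δ _ => hint' γ δ)]
          refine Finset.sum_congr rfl fun δ _ => ?_
          exact integral_const_mul _ _
      _ = (Q * Toperator μ N s h * Q) α β := by
          simp only [Toperator, Matrix.mul_apply, of_apply, Finset.mul_sum,
            Finset.sum_mul]
          rw [Finset.sum_comm]
          refine Finset.sum_congr rfl fun δ _ => ?_
          refine Finset.sum_congr rfl fun γ _ => ?_
          ring
  rw [key, hbal, ← hQQ, Matrix.mul_inv_rev]
  simp only [Matrix.mul_assoc]
  rw [Matrix.nonsing_inv_mul Q hdet, Matrix.mul_one, Matrix.mul_nonsing_inv Q hdet]
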